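/- Let β > 1 and set τ := arccos(1/β). Let e₁, e₂, f₁, f₂ ∈ ℝ² be pairwise distinct points such that both {e₁,e₂} and {f₁,f₂} are edges of the β-skeleton of {e₁,e₂,f₁,f₂}, and assume dist(f₁,f₂) ≤ tan(τ)·dist(e₁,e₂). Let y ∈ C_β(e₁,e₂) be a point such that the segment [f₁,f₂] crosses the triangle conv{y, e₁, e₂} between the segment [e₁,e₂] and y, i.e., [f₁,f₂] intersects both segments [y,e₁] and [y,e₂]. Then y ∈ conv{M, f₁, f₂} for some point M ∈ ℝ² with dist(M,f₁) = dist(M,f₂) = β·dist(f₁,f₂)/2. -/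

import Mathlib

set_option maxHeartbeats 1000000

section
open Metric Set

def Cbeta (β : ℝ) (x y : EuclideanSpace ℝ (Fin 2)) : Set (EuclideanSpace ℝ (Fin 2)) :=
  {z | ∃ M : EuclideanSpace ℝ (Fin 2),
    dist M x = β * dist x y / 2 ∧ dist M y = β * dist x y / 2 ∧ dist z M ≤ β * dist x y / 2}

def IsSkelEdge (β : ℝ) (φ : Set (EuclideanSpace ℝ (Fin 2)))
    (x y : EuclideanSpace ℝ (Fin 2)) : Prop :=
  x ∈ φ ∧ y ∈ φ ∧ x ≠ y ∧ Cbeta β x y ∩ φ ⊆ {x, y}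

end




lemma myabs_le (a b : ℝ) (h : a^2 ≤ b^2) (hb : 0 ≤ b) : |a| ≤ b := by
  rw [← Real.sqrt_sq_eq_abs, ← Real.sqrt_sq hb]; exact Real.sqrt_le_sqrt h

lemma opp_sq (t u : ℝ) (h : t * u ≤ 0) : (t - u)^2 = (|t| + |u|)^2 := by
  have habs : |t| * |u| = -(t*u) := by rw [← abs_mul]; exact abs_of_nonpos h
  nlinarith [sq_abs t, sq_abs u]

lemma opp_sign (yb b1 q : ℝ) (h1 : yb * b1 ≤ 0) (h2 : 0 < yb * q) : b1 * q ≤ 0 := by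
  by_contra h
  push_neg at h
  have h3 : (yb*b1)*(yb*q) ≤ 0 := mul_nonpos_of_nonpos_of_nonneg h1 h2.le
  have h6 : yb ≠ 0 := fun hy => by simp [hy] at h2
  have h7 : 0 < yb^2 := lt_of_le_of_ne (sq_nonneg yb) (Ne.symm (pow_ne_zero 2 h6))
  nlinarith [mul_pos h7 h]

lemma sq_le_add (b qq : ℝ) (hb : 0 ≤ b) (hq : 0 ≤ qq) : qq^2 ≤ (b + qq)^2 := by
  nlinarith

lemma key_lem (u2 b qq R c2 : ℝ) (h : u2 + (b + qq)^2 ≤ R^2) (hc : c2 = R^2 - qq^2) :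
    2*qq*b ≤ c2 - u2 := by nlinarith [sq_nonneg b]

lemma q_big (β s d R q : ℝ) (hβ : 1 < β) (hs : s^2 = β^2 - 1) (hs0 : 0 < s) (hd : 0 < d)
    (hR : β * d ≤ 2 * s * R) (hq2 : R^2 - (d/2)^2 ≤ q^2) : d ≤ 2*s* |q| := by
  have hbd : 0 < β * d := mul_pos (by linarith) hd
  have hR0 : 0 < R := by
    by_contra h
    push_neg at h
    have h5 : 2*s*R ≤ 0 := mul_nonpos_of_nonneg_of_nonpos (by positivity) h
    linarith
  have hsq : (β*d)*(β*d) ≤ (2*s*R)*(2*s*R) := mul_le_mul hR hR hbd.le (by positivity)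
  have hmul : (R^2 - (d/2)^2) * (4*s^2) ≤ q^2 * (4*s^2) :=
    mul_le_mul_of_nonneg_right hq2 (by positivity)
  have h4 : d^2 ≤ (2*s* |q|)^2 := by nlinarith [sq_abs q]
  have := myabs_le d (2*s* |q|) h4 (by positivity)
  calc d ≤ |d| := le_abs_self d
    _ ≤ 2*s* |q| := this

lemma disk_gap (β s d a1 X : ℝ) (hP1 : (β*d/2)^2 < a1^2 + X) (ha1 : a1^2 < (d/2)^2)
    (hs : s^2 = β^2 - 1) : (s*(d/2))^2 < X := by
  have hkey : (s*(d/2))^2 = (β*d/2)^2 - (d/2)^2 := by linear_combination (d^2/4) * hs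
  linarith

lemma gap_big (s d b1 : ℝ) (hh : (s*(d/2))^2 < (b1 - s*(d/2))^2) (hb : 0 ≤ b1)
    (hs0 : 0 < s) (hd : 0 < d) : s*d < b1 := by
  by_contra h
  push_neg at h
  nlinarith [mul_nonneg hb (sub_nonneg.2 h)]

lemma T_le_R (u2 T R : ℝ) (h : u2 + T^2 ≤ R^2) (hu : 0 ≤ u2) (hT : 0 ≤ T) (hR : 0 ≤ R) :
    T ≤ R := by
  have := myabs_le T R (by linarith) hR
  calc T ≤ |T| := le_abs_self T
    _ ≤ R := this

lemma final_contra (s d R q c2 : ℝ) (hs0 : 0 < s) (hd : 0 < d)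
    (e1 : s*d < R - |q|) (e2 : d < 2*s*(R + |q|)) (hc2 : c2 = R^2 - q^2)
    (hcsm : c2 ≤ (d/2)^2) : False := by
  have hprod : (s*d)*d < (R - |q|)*(2*s*(R + |q|)) :=
    mul_lt_mul'' e1 e2 (by positivity) hd.le
  have hrq : (R - |q|)*(2*s*(R+|q|)) = 2*s*c2 := by
    rw [hc2, ← sq_abs q]; ring
  nlinarith [mul_pos hs0 (mul_pos hd hd)]

lemma core (β s d R p q a1 b1 ya yb x : ℝ)
    (hβ : 1 < β) (hs : s^2 = β^2 - 1) (hs0 : 0 < s) (hd : 0 < d)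
    (hR : β * d ≤ 2 * s * R)
    (hNe1 : (a1 - p)^2 + (b1 - q)^2 = R^2)
    (hyN : (ya - p)^2 + (yb - q)^2 ≤ R^2)
    (hf1 : R^2 < (-(d/2) - p)^2 + q^2)
    (hf2 : R^2 < (d/2 - p)^2 + q^2)
    (hP1 : (β*d/2)^2 < a1^2 + (b1 - s*(d/2))^2)
    (hP2 : (β*d/2)^2 < a1^2 + (b1 + s*(d/2))^2)
    (hgN : (x - p)^2 + q^2 ≤ R^2) (hx1 : -(d/2) ≤ x) (hx2 : x ≤ d/2)
    (hsign : yb * b1 ≤ 0) :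
    |ya| ≤ d/2 ∧ |yb| ≤ s * (d/2 - |ya|) := by
  have hR0 : 0 < R := by
    have hbd : 0 < β * d := mul_pos (by linarith) hd
    by_contra h
    push_neg at h
    have h5 : 2*s*R ≤ 0 := mul_nonpos_of_nonneg_of_nonpos (by positivity) h
    linarith
  have hq2 : q^2 ≤ R^2 := by linarith [sq_nonneg (x - p)]
  set c := Real.sqrt (R^2 - q^2) with hcdef
  have hc0 : 0 ≤ c := Real.sqrt_nonneg _
  have hc2 : c^2 = R^2 - q^2 := Real.sq_sqrt (by linarith)
  have hxp2 : (x - p)^2 ≤ c^2 := by linarith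
  have hxpa : |x - p| ≤ c := myabs_le _ _ hxp2 hc0
  have hxpl : -c ≤ x - p := neg_le_of_abs_le hxpa
  have hxpu : x - p ≤ c := le_of_abs_le hxpa
  have hsq2 : c^2 < (d/2 - p)^2 := by linarith
  have hsq1 : c^2 < (-(d/2) - p)^2 := by linarith
  have h1 : c < d/2 - p := by
    by_contra h
    push_neg at h
    have hlb : -c ≤ d/2 - p := by linarith
    have := sq_le_sq' hlb h
    linarith
  have h2 : c < d/2 + p := by
    by_contra h
    push_neg at h
    have hlb : -c ≤ -(d/2) - p := by linarith
    have hub : -(d/2) - p ≤ c := by linarith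
    have := sq_le_sq' hlb hub
    linarith
  have hcd : 2*c < d := by linarith
  have hcsm : c^2 ≤ (d/2)^2 := sq_le_sq' (by linarith) (by linarith)
  have hq : d ≤ 2*s* |q| := q_big β s d R q hβ hs hs0 hd hR (by linarith)
  rcases le_or_gt (yb*q) 0 with hA | hB
  · -- Case A
    have hyq : (ya - p)^2 + (|yb| + |q|)^2 ≤ R^2 := by
      rw [← opp_sq yb q hA]; exact hyN
    have hu2 : (ya - p)^2 ≤ c^2 := by
      have := sq_le_add (|yb|) (|q|) (abs_nonneg _) (abs_nonneg _)
      rw [sq_abs q] at this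
      linarith
    have huabs : |ya - p| ≤ c := myabs_le _ _ hu2 hc0
    have hul : -c ≤ ya - p := neg_le_of_abs_le huabs
    have huu : ya - p ≤ c := le_of_abs_le huabs
    have hya : |ya| ≤ d/2 := by
      rw [abs_le]; constructor <;> linarith
    refine ⟨hya, ?_⟩
    have key : 2* |q| * |yb| ≤ c^2 - (ya-p)^2 := by
      have := key_lem ((ya-p)^2) (|yb|) (|q|) R (c^2) hyq (by rw [sq_abs q]; exact hc2)
      linarith
    have hyau : |ya| ≤ |p| + |ya - p| := by
      calc |ya| = |p + (ya - p)| := by ring_nf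
        _ ≤ |p| + |ya - p| := abs_add_le _ _
    have hpabs : |p| < d/2 - c := by
      rw [abs_lt]; constructor <;> linarith
    have st1 : d * |yb| ≤ s*(c^2 - (ya-p)^2) := by
      calc d * |yb| ≤ (2*s* |q|) * |yb| := mul_le_mul_of_nonneg_right hq (abs_nonneg yb)
        _ = s*(2* |q| * |yb|) := by ring
        _ ≤ s*(c^2 - (ya-p)^2) := mul_le_mul_of_nonneg_left key hs0.le
    have st2 : c^2 - (ya-p)^2 ≤ d*(d/2 - |ya|) := by
      have e1 : c - |ya - p| ≤ d/2 - |ya| := by linarith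
      have e2 : c + |ya - p| ≤ d := by linarith
      have e3 : 0 ≤ c + |ya-p| := by positivity
      have e4 : 0 ≤ d/2 - |ya| := by linarith
      calc c^2 - (ya-p)^2 = (c - |ya-p|) * (c + |ya-p|) := by
            rw [← sq_abs (ya - p)]; ring
        _ ≤ (d/2 - |ya|) * d := mul_le_mul e1 e2 e3 e4
        _ = d*(d/2 - |ya|) := by ring
    have hfin : d * |yb| ≤ d*(s*(d/2 - |ya|)) := by
      calc d * |yb| ≤ s*(c^2 - (ya-p)^2) := st1
        _ ≤ s*(d*(d/2-|ya|)) := mul_le_mul_of_nonneg_left st2 hs0.le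
        _ = d*(s*(d/2-|ya|)) := by ring
    exact le_of_mul_le_mul_left hfin hd
  · -- Case B : contradiction
    exfalso
    have hb1q : b1 * q ≤ 0 := opp_sign yb b1 q hsign hB
    have he1 : (a1 - p)^2 + (|b1| + |q|)^2 = R^2 := by
      rw [← opp_sq b1 q hb1q]; exact hNe1
    have hu12 : (a1 - p)^2 ≤ c^2 := by
      have := sq_le_add (|b1|) (|q|) (abs_nonneg _) (abs_nonneg _)
      rw [sq_abs q] at this
      linarith
    have hu1a : |a1 - p| ≤ c := myabs_le _ _ hu12 hc0
    have hu1l : -c ≤ a1 - p := neg_le_of_abs_le hu1a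
    have hu1u : a1 - p ≤ c := le_of_abs_le hu1a
    have ha1 : a1^2 < (d/2)^2 := by
      have hl : -(d/2) < a1 := by linarith
      have hu : a1 < d/2 := by linarith
      have := sq_lt_sq' hl hu
      linarith
    have hb1big : s*d < |b1| := by
      rcases le_or_gt 0 b1 with hb | hb
      · have hh := disk_gap β s d a1 _ hP1 ha1 hs
        have := gap_big s d b1 hh hb hs0 hd
        rw [abs_of_nonneg hb]; exact this
      · have hh := disk_gap β s d a1 _ hP2 ha1 hs
        have hh' : (s*(d/2))^2 < (-b1 - s*(d/2))^2 := by linear_combination hh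
        have := gap_big s d (-b1) hh' (by linarith) hs0 hd
        rw [abs_of_neg hb]; exact this
    have hsum : |b1| + |q| ≤ R :=
      T_le_R ((a1-p)^2) (|b1| + |q|) R he1.le (sq_nonneg _) (by positivity) hR0.le
    have e1 : s*d < R - |q| := by linarith
    have e2 : d < 2*s*(R + |q|) := by
      have hq0 : 0 ≤ 2*s* |q| := by positivity
      have hdb : d < β*d := by linarith [mul_pos (sub_pos.2 hβ) hd]
      have hexp : 2*s*(R + |q|) = 2*s*R + 2*s* |q| := by ring
      linarith
    exact final_contra s d R q (c^2) hs0 hd e1 e2 hc2 hcsm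



open Metric Set

noncomputable section

abbrev E2 := EuclideanSpace ℝ (Fin 2)

def cA (f₁ f₂ : E2) (d : ℝ) (z : E2) : ℝ :=
  ((z 0 - f₁ 0) * (f₂ 0 - f₁ 0) + (z 1 - f₁ 1) * (f₂ 1 - f₁ 1)) / d

def cB (f₁ f₂ : E2) (d : ℝ) (z : E2) : ℝ :=
  (-(z 0 - f₁ 0) * (f₂ 1 - f₁ 1) + (z 1 - f₁ 1) * (f₂ 0 - f₁ 0)) / d

def vp (f₁ f₂ : E2) : E2 := !₂[-(f₂ 1 - f₁ 1), f₂ 0 - f₁ 0]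

lemma dist_sq_pt (x y : E2) : dist x y ^ 2 = (x 0 - y 0)^2 + (x 1 - y 1)^2 := by
  rw [EuclideanSpace.dist_eq, Real.sq_sqrt (by positivity)]
  simp [Fin.sum_univ_two, Real.dist_eq, sq_abs]

lemma dist_sq_coord (f₁ f₂ : E2) (d : ℝ) (hd : d ≠ 0)
    (hw : (f₂ 0 - f₁ 0)^2 + (f₂ 1 - f₁ 1)^2 = d^2) (z z' : E2) :
    dist z z' ^ 2 = (cA f₁ f₂ d z - cA f₁ f₂ d z')^2 + (cB f₁ f₂ d z - cB f₁ f₂ d z')^2 := by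
  rw [dist_sq_pt]
  unfold cA cB
  field_simp
  linear_combination (-((z 0 - z' 0)^2 + (z 1 - z' 1)^2)) * hw

lemma cA_left (f₁ f₂ : E2) (d : ℝ) : cA f₁ f₂ d f₁ = 0 := by unfold cA; simp

lemma cB_left (f₁ f₂ : E2) (d : ℝ) : cB f₁ f₂ d f₁ = 0 := by unfold cB; ring

lemma cA_right (f₁ f₂ : E2) (d : ℝ) (hd : d ≠ 0)
    (hw : (f₂ 0 - f₁ 0)^2 + (f₂ 1 - f₁ 1)^2 = d^2) : cA f₁ f₂ d f₂ = d := by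
  unfold cA; rw [div_eq_iff hd]; linear_combination hw

lemma cB_right (f₁ f₂ : E2) (d : ℝ) : cB f₁ f₂ d f₂ = 0 := by unfold cB; ring

lemma param_apply (f₁ f₂ : E2) (t r : ℝ) (i : Fin 2) :
    (f₁ + t • (f₂ - f₁) + r • vp f₁ f₂) i
      = f₁ i + t * (f₂ i - f₁ i) + r * (vp f₁ f₂ i) := by
  simp [PiLp.add_apply, PiLp.smul_apply, PiLp.sub_apply, smul_eq_mul]

lemma vp0 (f₁ f₂ : E2) : vp f₁ f₂ 0 = -(f₂ 1 - f₁ 1) := rfl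
lemma vp1 (f₁ f₂ : E2) : vp f₁ f₂ 1 = f₂ 0 - f₁ 0 := rfl

lemma cA_param (f₁ f₂ : E2) (d : ℝ) (hd : d ≠ 0)
    (hw : (f₂ 0 - f₁ 0)^2 + (f₂ 1 - f₁ 1)^2 = d^2) (t r : ℝ) :
    cA f₁ f₂ d (f₁ + t • (f₂ - f₁) + r • vp f₁ f₂) = t * d := by
  unfold cA
  rw [param_apply, param_apply, vp0, vp1]
  rw [div_eq_iff hd]
  linear_combination t * hw

lemma cB_param (f₁ f₂ : E2) (d : ℝ) (hd : d ≠ 0)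
    (hw : (f₂ 0 - f₁ 0)^2 + (f₂ 1 - f₁ 1)^2 = d^2) (t r : ℝ) :
    cB f₁ f₂ d (f₁ + t • (f₂ - f₁) + r • vp f₁ f₂) = r * d := by
  unfold cB
  rw [param_apply, param_apply, vp0, vp1]
  rw [div_eq_iff hd]
  linear_combination r * hw

lemma cA_affine (f₁ f₂ : E2) (d : ℝ) (hd : d ≠ 0) (a b : ℝ) (hab : a + b = 1) (z z' : E2) :
    cA f₁ f₂ d (a • z + b • z') = a * cA f₁ f₂ d z + b * cA f₁ f₂ d z' := by
  have h0 : (a • z + b • z') 0 = a * z 0 + b * z' 0 := by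
    simp [PiLp.add_apply, PiLp.smul_apply, smul_eq_mul]
  have h1 : (a • z + b • z') 1 = a * z 1 + b * z' 1 := by
    simp [PiLp.add_apply, PiLp.smul_apply, smul_eq_mul]
  unfold cA
  rw [h0, h1]
  field_simp
  linear_combination (f₁ 0 * (f₂ 0 - f₁ 0) + f₁ 1 * (f₂ 1 - f₁ 1)) * hab

lemma cB_affine (f₁ f₂ : E2) (d : ℝ) (hd : d ≠ 0) (a b : ℝ) (hab : a + b = 1) (z z' : E2) :
    cB f₁ f₂ d (a • z + b • z') = a * cB f₁ f₂ d z + b * cB f₁ f₂ d z' := by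
  have h0 : (a • z + b • z') 0 = a * z 0 + b * z' 0 := by
    simp [PiLp.add_apply, PiLp.smul_apply, smul_eq_mul]
  have h1 : (a • z + b • z') 1 = a * z 1 + b * z' 1 := by
    simp [PiLp.add_apply, PiLp.smul_apply, smul_eq_mul]
  unfold cB
  rw [h0, h1]
  field_simp
  linear_combination (f₁ 1 * (f₂ 0 - f₁ 0) - f₁ 0 * (f₂ 1 - f₁ 1)) * hab

lemma recon (f₁ f₂ : E2) (d : ℝ) (hd : d ≠ 0)
    (hw : (f₂ 0 - f₁ 0)^2 + (f₂ 1 - f₁ 1)^2 = d^2) (z : E2) :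
    z = f₁ + (cA f₁ f₂ d z / d) • (f₂ - f₁) + (cB f₁ f₂ d z / d) • vp f₁ f₂ := by
  have hc0 : z 0 = f₁ 0 + cA f₁ f₂ d z / d * (f₂ 0 - f₁ 0)
      + cB f₁ f₂ d z / d * (-(f₂ 1 - f₁ 1)) := by
    unfold cA cB
    field_simp
    linear_combination (-(z 0 - f₁ 0)) * hw
  have hc1 : z 1 = f₁ 1 + cA f₁ f₂ d z / d * (f₂ 1 - f₁ 1)
      + cB f₁ f₂ d z / d * (f₂ 0 - f₁ 0) := by
    unfold cA cB
    field_simp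
    linear_combination (-(z 1 - f₁ 1)) * hw
  ext i
  fin_cases i
  · exact hc0.trans (param_apply f₁ f₂ _ _ 0).symm
  · exact hc1.trans (param_apply f₁ f₂ _ _ 1).symm

lemma eq_of_sq_eq (a b : ℝ) (h : a^2 = b^2) (ha : 0 ≤ a) (hb : 0 ≤ b) : a = b := by
  calc a = Real.sqrt (a^2) := (Real.sqrt_sq ha).symm
    _ = Real.sqrt (b^2) := by rw [h]
    _ = b := Real.sqrt_sq hb

lemma sign_lemma (a b u v : ℝ) (ha : 0 ≤ a) (hb : 0 ≤ b) (hab : a + b = 1)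
    (h : a * u + b * v = 0) : u * v ≤ 0 := by
  have h1 : a*(u*v) = -(b*(v*v)) := by linear_combination v * h
  have h2 : b*(u*v) = -(a*(u*u)) := by linear_combination u * h
  have h3 : u*v = a*(u*v) + b*(u*v) := by linear_combination (-(u*v)) * hab
  nlinarith [mul_nonneg hb (mul_self_nonneg v), mul_nonneg ha (mul_self_nonneg u)]

end
open Metric Set


lemma sq_lt_of_lt (a b : ℝ) (ha : 0 ≤ a) (h : a < b) : a^2 < b^2 := by nlinarith

theorem stmt2 (β : ℝ) (hβ : 1 < β) (e₁ e₂ f₁ f₂ : EuclideanSpace ℝ (Fin 2))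
    (h12 : e₁ ≠ e₂) (h13 : e₁ ≠ f₁) (h14 : e₁ ≠ f₂)
    (h23 : e₂ ≠ f₁) (h24 : e₂ ≠ f₂) (h34 : f₁ ≠ f₂)
    (he : IsSkelEdge β {e₁, e₂, f₁, f₂} e₁ e₂)
    (hf : IsSkelEdge β {e₁, e₂, f₁, f₂} f₁ f₂)
    (hlen : dist f₁ f₂ ≤ Real.tan (Real.arccos (1 / β)) * dist e₁ e₂)
    (y : EuclideanSpace ℝ (Fin 2)) (hy : y ∈ Cbeta β e₁ e₂)
    (hcross₁ : (segment ℝ f₁ f₂ ∩ segment ℝ y e₁).Nonempty)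
    (hcross₂ : (segment ℝ f₁ f₂ ∩ segment ℝ y e₂).Nonempty) :
    ∃ M : EuclideanSpace ℝ (Fin 2),
      dist M f₁ = β * dist f₁ f₂ / 2 ∧ dist M f₂ = β * dist f₁ f₂ / 2 ∧
      y ∈ convexHull ℝ {M, f₁, f₂} := by
  classical
  obtain ⟨N, hN1, hN2, hyN⟩ := hy
  obtain ⟨g₁, hgf, hgye⟩ := hcross₁
  have hd : (0:ℝ) < dist f₁ f₂ := dist_pos.2 h34
  have hD : (0:ℝ) < dist e₁ e₂ := dist_pos.2 h12
  set d := dist f₁ f₂ with hddef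
  set D := dist e₁ e₂ with hDdef
  have hb2 : (0:ℝ) < β^2 - 1 := by nlinarith
  set s := Real.sqrt (β^2-1) with hsdef
  have hs : s^2 = β^2 - 1 := Real.sq_sqrt hb2.le
  have hs0 : 0 < s := Real.sqrt_pos.2 hb2
  have hβ0 : (0:ℝ) < β := by linarith
  have htan : Real.tan (Real.arccos (1/β)) = s := by
    rw [Real.tan_arccos, hsdef, show 1 - (1/β)^2 = (β^2-1)/β^2 by field_simp,
      Real.sqrt_div hb2.le, Real.sqrt_sq hβ0.le]
    field_simp
  have hlen' : d ≤ s * D := by rw [htan] at hlen; exact hlen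
  set R := β * D / 2 with hRdef
  have hRpos : 0 < R := by positivity
  have hR : β * d ≤ 2 * s * R := by
    have h := mul_le_mul_of_nonneg_left hlen' hβ0.le
    calc β * d ≤ β * (s*D) := h
      _ = 2*s*R := by rw [hRdef]; ring
  have hdne : d ≠ 0 := hd.ne'
  have hw : (f₂ 0 - f₁ 0)^2 + (f₂ 1 - f₁ 1)^2 = d^2 := by
    have h := dist_sq_pt f₁ f₂
    rw [← hddef] at h
    linear_combination -h
  -- skeleton exclusions
  have hf₁N : R < dist f₁ N := by
    by_contra h
    push_neg at h
    have hmem : f₁ ∈ Cbeta β e₁ e₂ := ⟨N, hN1, hN2, h⟩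
    have := he.2.2.2 ⟨hmem, by simp⟩
    simp only [Set.mem_insert_iff, Set.mem_singleton_iff] at this
    rcases this with h' | h'
    · exact h13 h'.symm
    · exact h23 h'.symm
  have hf₂N : R < dist f₂ N := by
    by_contra h
    push_neg at h
    have hmem : f₂ ∈ Cbeta β e₁ e₂ := ⟨N, hN1, hN2, h⟩
    have := he.2.2.2 ⟨hmem, by simp⟩
    simp only [Set.mem_insert_iff, Set.mem_singleton_iff] at this
    rcases this with h' | h'
    · exact h14 h'.symm
    · exact h24 h'.symm
  -- the two candidate centers for the f-disk
  have hPdist : ∀ r : ℝ, r^2 = (s/2)^2 →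
      dist (f₁ + (1/2:ℝ) • (f₂ - f₁) + r • vp f₁ f₂) f₁ = β*d/2 ∧
      dist (f₁ + (1/2:ℝ) • (f₂ - f₁) + r • vp f₁ f₂) f₂ = β*d/2 := by
    intro r hr
    constructor
    · apply eq_of_sq_eq _ _ ?_ dist_nonneg (by positivity)
      rw [dist_sq_coord f₁ f₂ d hdne hw, cA_param f₁ f₂ d hdne hw,
        cB_param f₁ f₂ d hdne hw, cA_left, cB_left]
      linear_combination (d^2) * hr + (d^2/4) * hs
    · apply eq_of_sq_eq _ _ ?_ dist_nonneg (by positivity)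
      rw [dist_sq_coord f₁ f₂ d hdne hw, cA_param f₁ f₂ d hdne hw,
        cB_param f₁ f₂ d hdne hw, cA_right f₁ f₂ d hdne hw, cB_right]
      linear_combination (d^2) * hr + (d^2/4) * hs
  have hnotin : e₁ ∉ Cbeta β f₁ f₂ := by
    intro hin
    have := hf.2.2.2 ⟨hin, by simp⟩
    simp only [Set.mem_insert_iff, Set.mem_singleton_iff] at this
    rcases this with h' | h'
    · exact h13 h'
    · exact h14 h'
  have houtP : ∀ r : ℝ, r^2 = (s/2)^2 →
      (β*d/2)^2 < (cA f₁ f₂ d e₁ - d/2)^2 + (cB f₁ f₂ d e₁ - r*d)^2 := by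
    intro r hr
    have hout : β*d/2 < dist e₁ (f₁ + (1/2:ℝ) • (f₂ - f₁) + r • vp f₁ f₂) := by
      by_contra hle
      push_neg at hle
      obtain ⟨hq1, hq2⟩ := hPdist r hr
      exact hnotin ⟨_, hq1, hq2, hle⟩
    have h2 := sq_lt_of_lt _ _ (by positivity) hout
    rw [dist_sq_coord f₁ f₂ d hdne hw, cA_param f₁ f₂ d hdne hw,
      cB_param f₁ f₂ d hdne hw] at h2
    have hsh : (cA f₁ f₂ d e₁ - 1/2*d)^2 + (cB f₁ f₂ d e₁ - r*d)^2
        = (cA f₁ f₂ d e₁ - d/2)^2 + (cB f₁ f₂ d e₁ - r*d)^2 := by ring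
    rw [hsh] at h2
    exact h2
  -- core hypotheses in coordinates
  have hNe1c : (cA f₁ f₂ d e₁ - d/2 - (cA f₁ f₂ d N - d/2))^2
      + (cB f₁ f₂ d e₁ - cB f₁ f₂ d N)^2 = R^2 := by
    have h := dist_sq_coord f₁ f₂ d hdne hw e₁ N
    rw [dist_comm e₁ N, hN1] at h
    linear_combination -h
  have hyNc : (cA f₁ f₂ d y - d/2 - (cA f₁ f₂ d N - d/2))^2
      + (cB f₁ f₂ d y - cB f₁ f₂ d N)^2 ≤ R^2 := by
    have h := dist_sq_coord f₁ f₂ d hdne hw y N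
    have h2 : dist y N ^ 2 ≤ R^2 := by
      have := pow_le_pow_left₀ dist_nonneg hyN 2
      linarith
    rw [h] at h2
    calc (cA f₁ f₂ d y - d/2 - (cA f₁ f₂ d N - d/2))^2 + (cB f₁ f₂ d y - cB f₁ f₂ d N)^2
        = (cA f₁ f₂ d y - cA f₁ f₂ d N)^2 + (cB f₁ f₂ d y - cB f₁ f₂ d N)^2 := by ring
      _ ≤ R^2 := h2
  have hf1c : R^2 < (-(d/2) - (cA f₁ f₂ d N - d/2))^2 + (cB f₁ f₂ d N)^2 := by
    have h := dist_sq_coord f₁ f₂ d hdne hw f₁ N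
    rw [cA_left, cB_left] at h
    have h2 := sq_lt_of_lt _ _ hRpos.le hf₁N
    rw [h] at h2
    calc R^2 < (0 - cA f₁ f₂ d N)^2 + (0 - cB f₁ f₂ d N)^2 := h2
      _ = (-(d/2) - (cA f₁ f₂ d N - d/2))^2 + (cB f₁ f₂ d N)^2 := by ring
  have hf2c : R^2 < (d/2 - (cA f₁ f₂ d N - d/2))^2 + (cB f₁ f₂ d N)^2 := by
    have h := dist_sq_coord f₁ f₂ d hdne hw f₂ N
    rw [cA_right f₁ f₂ d hdne hw, cB_right] at h
    have h2 := sq_lt_of_lt _ _ hRpos.le hf₂N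
    rw [h] at h2
    calc R^2 < (d - cA f₁ f₂ d N)^2 + (0 - cB f₁ f₂ d N)^2 := h2
      _ = (d/2 - (cA f₁ f₂ d N - d/2))^2 + (cB f₁ f₂ d N)^2 := by ring
  have hP1c : (β*d/2)^2 < (cA f₁ f₂ d e₁ - d/2)^2 + (cB f₁ f₂ d e₁ - s*(d/2))^2 := by
    have h := houtP (s/2) rfl
    calc (β*d/2)^2 < (cA f₁ f₂ d e₁ - d/2)^2 + (cB f₁ f₂ d e₁ - s/2*d)^2 := h
      _ = (cA f₁ f₂ d e₁ - d/2)^2 + (cB f₁ f₂ d e₁ - s*(d/2))^2 := by ring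
  have hP2c : (β*d/2)^2 < (cA f₁ f₂ d e₁ - d/2)^2 + (cB f₁ f₂ d e₁ + s*(d/2))^2 := by
    have h := houtP (-(s/2)) (by ring)
    calc (β*d/2)^2 < (cA f₁ f₂ d e₁ - d/2)^2 + (cB f₁ f₂ d e₁ - -(s/2)*d)^2 := h
      _ = (cA f₁ f₂ d e₁ - d/2)^2 + (cB f₁ f₂ d e₁ + s*(d/2))^2 := by ring
  -- crossing point facts
  obtain ⟨a, b, ha, hb, hab, hgeq⟩ := hgf
  have hcAg : cA f₁ f₂ d g₁ = b*d := by
    rw [← hgeq, cA_affine f₁ f₂ d hdne a b hab, cA_left, cA_right f₁ f₂ d hdne hw]; ring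
  have hcBg : cB f₁ f₂ d g₁ = 0 := by
    rw [← hgeq, cB_affine f₁ f₂ d hdne a b hab, cB_left, cB_right]; ring
  have hble : b ≤ 1 := by linarith
  have hx1 : -(d/2) ≤ b*d - d/2 := by
    have := mul_nonneg hb hd.le
    linarith
  have hx2 : b*d - d/2 ≤ d/2 := by
    have := mul_le_mul_of_nonneg_right hble hd.le
    linarith
  have hgN : dist g₁ N ≤ R := by
    have hyball : y ∈ closedBall N R := mem_closedBall.mpr hyN
    have heball : e₁ ∈ closedBall N R := mem_closedBall.mpr (by rw [dist_comm]; exact le_of_eq hN1)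
    exact mem_closedBall.mp ((convex_closedBall N R).segment_subset hyball heball hgye)
  have hgNc : (b*d - d/2 - (cA f₁ f₂ d N - d/2))^2 + (cB f₁ f₂ d N)^2 ≤ R^2 := by
    have h := dist_sq_coord f₁ f₂ d hdne hw g₁ N
    rw [hcAg, hcBg] at h
    have h2 : dist g₁ N ^ 2 ≤ R^2 := by
      have := pow_le_pow_left₀ dist_nonneg hgN 2
      linarith
    rw [h] at h2
    calc (b*d - d/2 - (cA f₁ f₂ d N - d/2))^2 + (cB f₁ f₂ d N)^2
        = (b*d - cA f₁ f₂ d N)^2 + (0 - cB f₁ f₂ d N)^2 := by ring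
      _ ≤ R^2 := h2
  -- sign fact
  obtain ⟨a', b', ha', hb', hab', hgeq'⟩ := hgye
  have h0 : a' * cB f₁ f₂ d y + b' * cB f₁ f₂ d e₁ = 0 := by
    have h := cB_affine f₁ f₂ d hdne a' b' hab' y e₁
    rw [hgeq', hcBg] at h
    linarith
  have hsignc : cB f₁ f₂ d y * cB f₁ f₂ d e₁ ≤ 0 :=
    sign_lemma a' b' _ _ ha' hb' hab' h0
  -- apply the core lemma
  obtain ⟨hya, hyb⟩ := core β s d R (cA f₁ f₂ d N - d/2) (cB f₁ f₂ d N)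
    (cA f₁ f₂ d e₁ - d/2) (cB f₁ f₂ d e₁) (cA f₁ f₂ d y - d/2) (cB f₁ f₂ d y)
    (b*d - d/2) hβ hs hs0 hd hR hNe1c hyNc hf1c hf2c hP1c hP2c hgNc hx1 hx2 hsignc
  -- build M and the convex combination
  set ay := cA f₁ f₂ d y with hay
  set By := cB f₁ f₂ d y with hBy
  set σ : ℝ := if 0 ≤ By then 1 else -1 with hσ
  have hσ2 : σ^2 = 1 := by
    rw [hσ]; split_ifs <;> norm_num
  have hσb : σ * |By| = By := by
    rw [hσ]; split_ifs with h
    · rw [abs_of_nonneg h]; ring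
    · rw [abs_of_neg (lt_of_not_ge h)]; ring
  set M := f₁ + (1/2:ℝ) • (f₂ - f₁) + (σ*s/2) • vp f₁ f₂ with hMdef
  obtain ⟨hM1, hM2⟩ := hPdist (σ*s/2) (by linear_combination (s^2/4) * hσ2)
  refine ⟨M, hM1, hM2, ?_⟩
  -- coefficients
  have hk1 : d/2 - |ay - d/2| ≤ ay := by
    have := neg_abs_le (ay - d/2); linarith
  have hk2 : d/2 - |ay - d/2| ≤ d - ay := by
    have := le_abs_self (ay - d/2); linarith
  have hb'1 : |By| ≤ s * ay := by
    calc |By| ≤ s * (d/2 - |ay - d/2|) := hyb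
      _ ≤ s * ay := mul_le_mul_of_nonneg_left hk1 hs0.le
  have hb'2 : |By| ≤ s * (d - ay) := by
    calc |By| ≤ s * (d/2 - |ay - d/2|) := hyb
      _ ≤ s * (d - ay) := mul_le_mul_of_nonneg_left hk2 hs0.le
  set l₁ : ℝ := 2*|By|/(s*d) with hl₁
  set l₂ : ℝ := (s*(d - ay) - |By|)/(s*d) with hl₂
  set l₃ : ℝ := (s*ay - |By|)/(s*d) with hl₃
  have hsd : (0:ℝ) < s*d := by positivity
  have hl₁0 : 0 ≤ l₁ := by positivity
  have hl₂0 : 0 ≤ l₂ := div_nonneg (by linarith) hsd.le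
  have hl₃0 : 0 ≤ l₃ := div_nonneg (by linarith) hsd.le
  have hsum : l₁ + l₂ + l₃ = 1 := by
    rw [hl₁, hl₂, hl₃]; field_simp; ring
  have hcoef1 : l₁ * (1/2) + l₃ = ay / d := by
    rw [hl₁, hl₃]; field_simp; ring
  have hcoef2 : l₁ * (σ*s/2) = By / d := by
    rw [hl₁]
    rw [div_mul_eq_mul_div, div_eq_div_iff hsd.ne' hdne]
    linear_combination (s*d) * hσb
  have hRHS : l₁ • M + l₂ • f₁ + l₃ • f₂
      = f₁ + (ay/d) • (f₂ - f₁) + (By/d) • vp f₁ f₂ := by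
    rw [hMdef, show l₂ = 1 - l₁ - l₃ by linarith, ← hcoef1, ← hcoef2]
    module
  have hy' : y = l₁ • M + l₂ • f₁ + l₃ • f₂ := by
    rw [hRHS, hay, hBy]
    exact recon f₁ f₂ d hdne hw y
  have hmem := Finset.centerMass_mem_convexHull (Finset.univ : Finset (Fin 3))
    (w := ![l₁, l₂, l₃]) (z := ![M, f₁, f₂])
    (by intro i _; fin_cases i <;> simpa)
    (by simp [Fin.sum_univ_three]; linarith)
    (s := ({M, f₁, f₂} : Set (EuclideanSpace ℝ (Fin 2))))
    (by intro i _; fin_cases i <;> simp)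
  have hcm : (Finset.univ : Finset (Fin 3)).centerMass ![l₁, l₂, l₃] ![M, f₁, f₂]
      = l₁ • M + l₂ • f₁ + l₃ • f₂ := by
    rw [Finset.centerMass]
    simp [Fin.sum_univ_three, hsum]
  rw [hy', ← hcm]
  exact hmem
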